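/- Let S be a commutative semiring such that for every maximal ideal m, the localization S_m has no nonzero nilpotent elements. Then S has no nonzero nilpotent elements. -/
import Mathlib


/-- If all localizations of a commutative semiring at maximal ideals are
nilpotent-free, then the semiring itself is nilpotent-free. -/
theorem nilpotentFree_of_local {S : Type*} [CommSemiring S] [Nontrivial S]
    (h : ∀ (m : Ideal S) (hm : m.IsMaximal),
      ∀ x : Localization (@Ideal.primeCompl S _ m hm.isPrime),
        x ≠ 0 → ∀ n : ℕ, 1 ≤ n → x ^ n ≠ 0) :
    ∀ s : S, s ≠ 0 → ∀ n : ℕ, 1 ≤ n → s ^ n ≠ 0 := by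
  intro s hs n hn hsn
  -- annihilator ideal of s
  set I : Ideal S :=
    { carrier := {x | x * s = 0}
      add_mem' := fun {a b} ha hb => by
        simp only [Set.mem_setOf_eq] at *
        rw [add_mul, ha, hb, add_zero]
      zero_mem' := by simp
      smul_mem' := fun c a ha => by
        simp only [Set.mem_setOf_eq, smul_eq_mul] at *
        rw [mul_assoc, ha, mul_zero] } with hI
  have hIne : I ≠ ⊤ := by
    intro htop
    have : (1 : S) ∈ I := htop ▸ Submodule.mem_top
    have h1 : (1:S) * s = 0 := this
    rw [one_mul] at h1
    exact hs h1
  obtain ⟨m, hm, hIm⟩ := I.exists_le_maximal hIne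
  set f := algebraMap S (Localization (@Ideal.primeCompl S _ m hm.isPrime))
  have hfs : f s ≠ 0 := by
    intro h0
    obtain ⟨t, ht⟩ := (IsLocalization.map_eq_zero_iff (Ideal.primeCompl m) _ s).mp h0
    exact t.2 (hIm ht)
  exact h m hm (f s) hfs n hn (by rw [← map_pow, hsn, map_zero])
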